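/- Let a, b, c : ℝ → ℝ and let x₁, x₂, x₃ : ℝ → ℝ be differentiable functions satisfying the Riccati equation xᵢ'(t) = a(t) + b(t)·xᵢ(t) + c(t)·xᵢ(t)² for all t ∈ ℝ and i = 1,2,3. Let k ∈ ℝ and suppose the denominator D(t) := x₃(t) − x₂(t) + k·(x₃(t) − x₁(t)) is nonzero for every t ∈ ℝ. Then the function x(t) := (x₁(t)·(x₃(t) − x₂(t)) + k·x₂(t)·(x₃(t) − x₁(t))) / D(t) is differentiable and satisfies x'(t) = a(t) + b(t)·x(t) + c(t)·x(t)² for all t ∈ ℝ. -/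

import Mathlib

/-- The classical superposition rule for the real Riccati equation:
given three particular solutions `x₁, x₂, x₃` and a constant `k`, the combination
`x = (x₁(x₃ - x₂) + k x₂(x₃ - x₁)) / (x₃ - x₂ + k(x₃ - x₁))` is again a solution. -/
theorem riccati_superposition_rule
    (a b c x₁ x₂ x₃ : ℝ → ℝ) (k : ℝ)
    (h₁ : ∀ t, HasDerivAt x₁ (a t + b t * x₁ t + c t * (x₁ t) ^ 2) t)
    (h₂ : ∀ t, HasDerivAt x₂ (a t + b t * x₂ t + c t * (x₂ t) ^ 2) t)
    (h₃ : ∀ t, HasDerivAt x₃ (a t + b t * x₃ t + c t * (x₃ t) ^ 2) t)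
    (hD : ∀ t, x₃ t - x₂ t + k * (x₃ t - x₁ t) ≠ 0) :
    ∀ t, HasDerivAt
      (fun t => (x₁ t * (x₃ t - x₂ t) + k * x₂ t * (x₃ t - x₁ t)) /
        (x₃ t - x₂ t + k * (x₃ t - x₁ t)))
      (a t + b t * ((x₁ t * (x₃ t - x₂ t) + k * x₂ t * (x₃ t - x₁ t)) /
          (x₃ t - x₂ t + k * (x₃ t - x₁ t))) +
        c t * ((x₁ t * (x₃ t - x₂ t) + k * x₂ t * (x₃ t - x₁ t)) /
          (x₃ t - x₂ t + k * (x₃ t - x₁ t))) ^ 2) t := by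
  intro t
  have hN : HasDerivAt (fun t => x₁ t * (x₃ t - x₂ t) + k * x₂ t * (x₃ t - x₁ t))
      ((a t + b t * x₁ t + c t * (x₁ t) ^ 2) * (x₃ t - x₂ t) +
        x₁ t * ((a t + b t * x₃ t + c t * (x₃ t) ^ 2) - (a t + b t * x₂ t + c t * (x₂ t) ^ 2)) +
       ((k * (a t + b t * x₂ t + c t * (x₂ t) ^ 2)) * (x₃ t - x₁ t) +
        k * x₂ t * ((a t + b t * x₃ t + c t * (x₃ t) ^ 2) - (a t + b t * x₁ t + c t * (x₁ t) ^ 2)))) t :=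
    ((h₁ t).mul ((h₃ t).sub (h₂ t))).add (((h₂ t).const_mul k).mul ((h₃ t).sub (h₁ t)))
  have hDen : HasDerivAt (fun t => x₃ t - x₂ t + k * (x₃ t - x₁ t))
      (((a t + b t * x₃ t + c t * (x₃ t) ^ 2) - (a t + b t * x₂ t + c t * (x₂ t) ^ 2)) +
        k * ((a t + b t * x₃ t + c t * (x₃ t) ^ 2) - (a t + b t * x₁ t + c t * (x₁ t) ^ 2))) t :=
    ((h₃ t).sub (h₂ t)).add (((h₃ t).sub (h₁ t)).const_mul k)
  have := hN.div hDen (hD t)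
  refine this.congr_deriv ?_
  have hd := hD t
  field_simp
  ring
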